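/- For every block length n ≤ 8 and every crossover probability ε ∈ (0,1/2), there exists a linear (n,2) binary code C (a 4-codeword subgroup of {0,1}^n) such that λ_C ≥ λ_{C'} for every (n,2) code C' with 4 codewords; i.e., linear (n,2) codes are optimal under ML decoding on the BSC. -/

import Mathlib

open Finset

/-- Minimum Hamming distance from `y` to the 4 rows (codewords) of `C`. -/
def dmin {m : ℕ} (C : Fin 4 → Fin m → ZMod 2) (y : Fin m → ZMod 2) : ℕ :=
  Finset.univ.inf' ⟨0, Finset.mem_univ 0⟩ (fun i => hammingDist (C i) y)

/-- Number of outputs at min-distance `d` from the code `C`. -/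
def alpha {m : ℕ} (C : Fin 4 → Fin m → ZMod 2) (d : ℕ) : ℕ :=
  (Finset.univ.filter (fun y : Fin m → ZMod 2 => dmin C y = d)).card

/-- Average ML correct decoding probability of `C` on a BSC with crossover `ε`. -/
noncomputable def lam {m : ℕ} (C : Fin 4 → Fin m → ZMod 2) (ε : ℝ) : ℝ :=
  (1/4) * ∑ d ∈ Finset.range (m+1), (alpha C d : ℝ) * (1-ε)^(m-d) * ε^d

/-- The column pattern (in `{0,1}^4`) associated with the integer `i`,
row 1 being the most significant bit. -/
def pat (i : ℕ) : Fin 4 → ZMod 2 := fun j => if Nat.testBit i (3 - (j : ℕ)) then 1 else 0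

/-- Number of columns of `C` equal to the pattern `p`. -/
def colCount {m : ℕ} (C : Fin 4 → Fin m → ZMod 2) (p : Fin 4 → ZMod 2) : ℕ :=
  (Finset.univ.filter (fun k : Fin m => (fun i => C i k) = p)).card

/-- A code is linear if its set of codewords is a subgroup of `({0,1}^n, ⊕)`. -/
def IsLinearCode {m : ℕ} (C : Fin 4 → Fin m → ZMod 2) : Prop :=
  ∃ H : AddSubgroup (Fin m → ZMod 2), Set.range C = (H : Set (Fin m → ZMod 2))

/-- `w_i(y)`: number of positions with column pattern `i` where `y` is 1. -/
def wcount {m : ℕ} (C : Fin 4 → Fin m → ZMod 2) (i : ℕ) (y : Fin m → ZMod 2) : ℕ :=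
  (Finset.univ.filter (fun k : Fin m => (fun r => C r k) = pat i ∧ y k = 1)).card

/-! ### Auxiliary machinery -/

/-- The BSC kernel `(1-ε)^(m-d) ε^d`. -/
noncomputable def fB (m : ℕ) (ε : ℝ) (d : ℕ) : ℝ := (1-ε)^(m-d) * ε^d

/-- Number of outputs within distance `r` of the code. -/
def gcard {m : ℕ} (C : Fin 4 → Fin m → ZMod 2) (r : ℕ) : ℕ :=
  (Finset.univ.filter (fun y : Fin m → ZMod 2 => dmin C y ≤ r)).card

lemma dmin_le_iff {m : ℕ} (C : Fin 4 → Fin m → ZMod 2) (y : Fin m → ZMod 2) (r : ℕ) :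
    dmin C y ≤ r ↔ ∃ i, hammingDist (C i) y ≤ r := by
  rw [dmin]; exact (Finset.inf'_le_iff _).trans (by simp)

lemma dmin_le {m : ℕ} (C : Fin 4 → Fin m → ZMod 2) (y : Fin m → ZMod 2) :
    dmin C y ≤ m := by
  rw [dmin_le_iff]
  exact ⟨0, le_trans hammingDist_le_card_fintype (by simp)⟩

lemma hammingDist_eq_hammingNorm' {m : ℕ} (x y : Fin m → ZMod 2) :
    hammingDist x y = hammingNorm (x - y) := by
  rw [hammingDist_comm, hammingDist_eq_hammingNorm, neg_add_eq_sub]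

lemma char2_neg (m : ℕ) (z : Fin m → ZMod 2) : -z = z := by
  funext k
  have : ∀ c : ZMod 2, -c = c := by decide
  exact this (z k)

lemma lam_eq {m : ℕ} (C : Fin 4 → Fin m → ZMod 2) (ε : ℝ) :
    lam C ε = (1/4) * ((2^m : ℝ) * fB m ε m +
      ∑ r ∈ Finset.range m, (gcard C r : ℝ) * (fB m ε r - fB m ε (r+1))) := by
  have hmem : ∀ y : Fin m → ZMod 2, y ∈ Finset.univ → dmin C y ∈ Finset.range (m+1) := by
    intro y _; rw [Finset.mem_range, Nat.lt_succ_iff]; exact dmin_le C y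
  have step1 : ∑ d ∈ Finset.range (m+1), (alpha C d : ℝ) * fB m ε d
      = ∑ y : Fin m → ZMod 2, fB m ε (dmin C y) := by
    rw [← Finset.sum_fiberwise_of_maps_to hmem (fun y => fB m ε (dmin C y))]
    refine Finset.sum_congr rfl (fun d _ => ?_)
    rw [alpha, Finset.sum_congr rfl (g := fun _ => fB m ε d)
      (fun y hy => by rw [(Finset.mem_filter.mp hy).2]), Finset.sum_const, nsmul_eq_mul]
  have step2 : ∀ y : Fin m → ZMod 2, fB m ε (dmin C y) =
      fB m ε m + ∑ r ∈ Finset.range m,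
        (if dmin C y ≤ r then fB m ε r - fB m ε (r+1) else 0) := by
    intro y
    have hd : dmin C y ≤ m := dmin_le C y
    have hfilter : Finset.filter (fun r => dmin C y ≤ r) (Finset.range m)
        = Finset.Ico (dmin C y) m := by
      ext r; simp [Finset.mem_filter, Finset.mem_range, Finset.mem_Ico, and_comm]
    rw [← Finset.sum_filter, hfilter,
      Finset.sum_Ico_eq_sub (fun r => fB m ε r - fB m ε (r+1)) hd,
      Finset.sum_range_sub' (fB m ε), Finset.sum_range_sub' (fB m ε)]
    ring
  have step3 : ∑ y : Fin m → ZMod 2, fB m ε (dmin C y)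
      = (2^m : ℝ) * fB m ε m +
        ∑ r ∈ Finset.range m, (gcard C r : ℝ) * (fB m ε r - fB m ε (r+1)) := by
    rw [Finset.sum_congr rfl (fun y _ => step2 y), Finset.sum_add_distrib,
      Finset.sum_const, Finset.sum_comm]
    congr 1
    · rw [nsmul_eq_mul, Finset.card_univ, Fintype.card_fun, Fintype.card_fin,
        ZMod.card 2]
      norm_num
    · refine Finset.sum_congr rfl (fun r _ => ?_)
      rw [← Finset.sum_filter, Finset.sum_const, nsmul_eq_mul, gcard]
  rw [lam, ← step3, ← step1]
  congr 1
  refine Finset.sum_congr rfl (fun d _ => ?_)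
  rw [fB, mul_assoc]

lemma lam_le_lam {m : ℕ} (C C' : Fin 4 → Fin m → ZMod 2) (ε : ℝ)
    (hε1 : 0 < ε) (hε2 : ε < 1/2)
    (h : ∀ r, r < m → gcard C' r ≤ gcard C r) :
    lam C' ε ≤ lam C ε := by
  rw [lam_eq, lam_eq]
  refine mul_le_mul_of_nonneg_left (add_le_add_right (Finset.sum_le_sum fun r hr => ?_) _)
    (by norm_num)
  have hrm : r < m := Finset.mem_range.mp hr
  have hΔ : 0 ≤ fB m ε r - fB m ε (r+1) := by
    have h1 : m - r = (m - (r+1)) + 1 := by omega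
    rw [fB, fB, h1, pow_succ, pow_succ]
    have h2 : (0:ℝ) ≤ (1-ε)^(m-(r+1)) := pow_nonneg (by linarith) _
    have h3 : (0:ℝ) ≤ ε^r := pow_nonneg (le_of_lt hε1) _
    have h4 : (0:ℝ) ≤ 1 - 2*ε := by linarith
    nlinarith [mul_nonneg (mul_nonneg h2 h3) h4]
  exact mul_le_mul_of_nonneg_right (Nat.cast_le.mpr (h r hrm)) hΔ

/-- Trivial bound : all outputs. -/
lemma gcard_le_total {m : ℕ} (C : Fin 4 → Fin m → ZMod 2) (r : ℕ) :
    gcard C r ≤ 2^m := by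
  calc gcard C r ≤ Finset.univ.card := Finset.card_filter_le _ _
    _ = 2^m := by rw [Finset.card_univ, Fintype.card_fun, Fintype.card_fin, ZMod.card 2]

/-- At distance 0 there are at most 4 outputs (the codewords). -/
lemma gcard_zero_le {m : ℕ} (C : Fin 4 → Fin m → ZMod 2) : gcard C 0 ≤ 4 := by
  have hsub : Finset.univ.filter (fun y : Fin m → ZMod 2 => dmin C y ≤ 0)
      ⊆ Finset.univ.image C := by
    intro y hy
    obtain ⟨i, hi⟩ := (dmin_le_iff C y 0).mp (Finset.mem_filter.mp hy).2
    exact Finset.mem_image.mpr ⟨i, Finset.mem_univ i,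
      hammingDist_eq_zero.mp (Nat.le_zero.mp hi)⟩
  calc gcard C 0 ≤ (Finset.univ.image C).card := Finset.card_le_card hsub
    _ ≤ (Finset.univ : Finset (Fin 4)).card := Finset.card_image_le
    _ = 4 := by simp

/-- Translating a Hamming ball to a norm ball. -/
lemma card_ball {m : ℕ} (u : Fin m → ZMod 2) (r : ℕ) :
    (Finset.univ.filter (fun y : Fin m → ZMod 2 => hammingDist u y ≤ r)).card
      = (Finset.univ.filter (fun z : Fin m → ZMod 2 => hammingNorm z ≤ r)).card := by
  refine Finset.card_bij' (fun y _ => y - u) (fun z _ => u + z) ?_ ?_ ?_ ?_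
  · intro y hy
    simp only [Finset.mem_filter, Finset.mem_univ, true_and] at hy ⊢
    rwa [show y - u = -(u - y) by abel, char2_neg, ← hammingDist_eq_hammingNorm']
  · intro z hz
    simp only [Finset.mem_filter, Finset.mem_univ, true_and] at hz ⊢
    rwa [hammingDist_eq_hammingNorm', show u - (u + z) = -z by abel, char2_neg]
  · intro y _; show u + (y - u) = y; rw [add_comm, sub_add_cancel]
  · intro z _; show u + z - u = z; rw [add_sub_cancel_left]

lemma gcard_le_four_ball {m : ℕ} (C : Fin 4 → Fin m → ZMod 2) (r : ℕ) :
    gcard C r ≤ 4 * (Finset.univ.filter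
      (fun z : Fin m → ZMod 2 => hammingNorm z ≤ r)).card := by
  have hsub : Finset.univ.filter (fun y : Fin m → ZMod 2 => dmin C y ≤ r)
      ⊆ Finset.univ.biUnion (fun i : Fin 4 =>
        Finset.univ.filter (fun y => hammingDist (C i) y ≤ r)) := by
    intro y hy
    obtain ⟨i, hi⟩ := (dmin_le_iff C y r).mp (Finset.mem_filter.mp hy).2
    exact Finset.mem_biUnion.mpr ⟨i, Finset.mem_univ i,
      Finset.mem_filter.mpr ⟨Finset.mem_univ y, hi⟩⟩
  calc gcard C r ≤ _ := Finset.card_le_card hsub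
    _ ≤ ∑ i : Fin 4, (Finset.univ.filter
        (fun y => hammingDist (C i) y ≤ r)).card := Finset.card_biUnion_le
    _ = ∑ _i : Fin 4, (Finset.univ.filter
        (fun z : Fin m → ZMod 2 => hammingNorm z ≤ r)).card := by
        exact Finset.sum_congr rfl (fun i _ => card_ball (C i) r)
    _ = 4 * _ := by rw [Finset.sum_const]; simp [Finset.card_univ]

/-! ### Linear codes of the form `![0, a, b, a+b]` -/

lemma isLinear_quad {m : ℕ} (a b : Fin m → ZMod 2) :
    IsLinearCode ![0, a, b, a + b] := by
  set C : Fin 4 → Fin m → ZMod 2 := ![0, a, b, a + b] with hC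
  have hself : ∀ x : Fin m → ZMod 2, x + x = 0 := by
    intro x; funext k
    have : ∀ c : ZMod 2, c + c = 0 := by decide
    exact this (x k)
  refine ⟨{ carrier := Set.range C
            zero_mem' := ⟨0, rfl⟩
            add_mem' := ?_
            neg_mem' := ?_ }, rfl⟩
  · rintro x y ⟨i, rfl⟩ ⟨j, rfl⟩
    fin_cases i <;> fin_cases j <;>
      simp only [hC, Matrix.cons_val_zero, Matrix.cons_val_one, Matrix.head_cons,
        Matrix.cons_val_two, Matrix.tail_cons, Matrix.cons_val_three]
    · exact ⟨0, by simp [hC, hself]⟩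
    · exact ⟨1, by simp [hC]⟩
    · exact ⟨2, by simp [hC]⟩
    · exact ⟨3, by simp [hC]⟩
    · exact ⟨1, by simp [hC]⟩
    · exact ⟨0, by simp [hC, hself]⟩
    · exact ⟨3, by simp [hC]⟩
    · exact ⟨2, by simp [hC]; rw [show a + (a + b) = (a + a) + b by abel, hself, zero_add]⟩
    · exact ⟨2, by simp [hC]⟩
    · exact ⟨3, by simp [hC]; rw [show b + a = a + b by abel]⟩
    · exact ⟨0, by simp [hC, hself]⟩
    · exact ⟨1, by simp [hC]; rw [show b + (a + b) = a + (b + b) by abel, hself, add_zero]⟩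
    · exact ⟨3, by simp [hC]⟩
    · exact ⟨2, by simp [hC]; rw [show a + b + a = (a + a) + b by abel, hself, zero_add]⟩
    · exact ⟨1, by simp [hC]; rw [show a + b + b = a + (b + b) by abel, hself, add_zero]⟩
    · exact ⟨0, by simp [hC]; rw [show a + b + (a + b) = (a + b) + (a + b) by abel, hself]⟩
  · rintro x ⟨i, rfl⟩
    exact ⟨i, by rw [char2_neg]⟩

/-! ### Special bound for `n = 7`, radius 2 -/

lemma plotkin7 (u v w : Fin 7 → ZMod 2) :
    hammingDist u v ≤ 4 ∨ hammingDist u w ≤ 4 ∨ hammingDist v w ≤ 4 := by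
  by_contra hcon
  push_neg at hcon
  obtain ⟨h1, h2, h3⟩ := hcon
  have e : ∀ (x y : Fin 7 → ZMod 2),
      hammingDist x y = ∑ k : Fin 7, (if x k ≠ y k then 1 else 0) := by
    intro x y
    rw [show hammingDist x y = (Finset.univ.filter fun i => x i ≠ y i).card from rfl,
      Finset.card_filter]
  have key : hammingDist u v + hammingDist u w + hammingDist v w ≤ 14 := by
    rw [e, e, e, ← Finset.sum_add_distrib, ← Finset.sum_add_distrib]
    calc ∑ k : Fin 7, ((if u k ≠ v k then 1 else 0) + (if u k ≠ w k then 1 else 0)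
          + (if v k ≠ w k then 1 else 0))
        ≤ ∑ _k : Fin 7, 2 := by
          refine Finset.sum_le_sum (fun k _ => ?_)
          have : ∀ a b c : ZMod 2, ((if a ≠ b then 1 else 0) + (if a ≠ c then 1 else 0)
              + (if b ≠ c then 1 else 0) : ℕ) ≤ 2 := by decide
          exact this _ _ _
      _ = 14 := by simp
  omega

set_option maxHeartbeats 4000000 in
set_option maxRecDepth 100000 in
lemma key7 : ∀ w : Fin 7 → ZMod 2, hammingNorm w ≤ 4 →
    6 ≤ (Finset.univ.filter (fun z : Fin 7 → ZMod 2 =>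
      hammingNorm z ≤ 2 ∧ hammingNorm (w - z) ≤ 2)).card := by decide

lemma inter_lb (u v : Fin 7 → ZMod 2) (h : hammingDist u v ≤ 4) :
    6 ≤ ((Finset.univ.filter fun y => hammingDist u y ≤ 2)
      ∩ (Finset.univ.filter fun y => hammingDist v y ≤ 2)).card := by
  rw [← Finset.filter_and]
  have hcard : (Finset.univ.filter fun y : Fin 7 → ZMod 2 =>
        hammingDist u y ≤ 2 ∧ hammingDist v y ≤ 2).card
      = (Finset.univ.filter fun z : Fin 7 → ZMod 2 =>
        hammingNorm z ≤ 2 ∧ hammingNorm ((v - u) - z) ≤ 2).card := by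
    refine Finset.card_bij' (fun y _ => y - u) (fun z _ => u + z) ?_ ?_
      (fun y _ => by show u + (y - u) = y; rw [add_comm, sub_add_cancel])
      (fun z _ => by show u + z - u = z; rw [add_sub_cancel_left])
    · intro y hy
      simp only [Finset.mem_filter, Finset.mem_univ, true_and] at hy ⊢
      constructor
      · rw [show y - u = -(u - y) by abel, char2_neg, ← hammingDist_eq_hammingNorm']
        exact hy.1
      · rw [show v - u - (y - u) = v - y by abel, ← hammingDist_eq_hammingNorm']
        exact hy.2
    · intro z hz
      simp only [Finset.mem_filter, Finset.mem_univ, true_and] at hz ⊢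
      constructor
      · rw [hammingDist_eq_hammingNorm', show u - (u + z) = -z by abel, char2_neg]
        exact hz.1
      · rw [hammingDist_eq_hammingNorm', show v - (u + z) = v - u - z by abel]
        exact hz.2
  rw [hcard]
  apply key7
  rw [show v - u = -(u - v) by abel, char2_neg, ← hammingDist_eq_hammingNorm']
  exact h

lemma card_union4_le {α : Type*} [DecidableEq α] (S B0 B1 B2 B3 : Finset α)
    (hS : ∀ y ∈ S, y ∈ B0 ∨ y ∈ B1 ∨ y ∈ B2 ∨ y ∈ B3)
    (h0 : B0.card ≤ 29) (h1 : B1.card ≤ 29) (h2 : B2.card ≤ 29) (h3 : B3.card ≤ 29)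
    (h01 : 6 ≤ (B0 ∩ B1).card)
    (hx : 6 ≤ (B2 ∩ B0).card ∨ 6 ≤ (B2 ∩ B1).card ∨ 6 ≤ (B2 ∩ B3).card) :
    S.card ≤ 104 := by
  have e01 : (B0 ∪ B1).card + (B0 ∩ B1).card = B0.card + B1.card :=
    Finset.card_union_add_card_inter _ _
  have c01 : (B0 ∪ B1).card ≤ 52 := by omega
  rcases hx with hx | hx | hx
  · have hsub : S ⊆ ((B0 ∪ B1) ∪ B3) ∪ B2 := by
      intro y hy; rcases hS y hy with h | h | h | h <;> simp [Finset.mem_union, h]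
    have c1 : S.card ≤ (((B0 ∪ B1) ∪ B3) ∪ B2).card := Finset.card_le_card hsub
    have e2 : (((B0 ∪ B1) ∪ B3) ∪ B2).card + (((B0 ∪ B1) ∪ B3) ∩ B2).card
        = ((B0 ∪ B1) ∪ B3).card + B2.card := Finset.card_union_add_card_inter _ _
    have hsub2 : B2 ∩ B0 ⊆ ((B0 ∪ B1) ∪ B3) ∩ B2 := by
      intro y hy
      rw [Finset.mem_inter] at hy ⊢
      exact ⟨by simp [Finset.mem_union, hy.2], hy.1⟩
    have c2 : 6 ≤ (((B0 ∪ B1) ∪ B3) ∩ B2).card :=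
      le_trans hx (Finset.card_le_card hsub2)
    have c3 : ((B0 ∪ B1) ∪ B3).card ≤ (B0 ∪ B1).card + B3.card := Finset.card_union_le _ _
    omega
  · have hsub : S ⊆ ((B0 ∪ B1) ∪ B3) ∪ B2 := by
      intro y hy; rcases hS y hy with h | h | h | h <;> simp [Finset.mem_union, h]
    have c1 : S.card ≤ (((B0 ∪ B1) ∪ B3) ∪ B2).card := Finset.card_le_card hsub
    have e2 : (((B0 ∪ B1) ∪ B3) ∪ B2).card + (((B0 ∪ B1) ∪ B3) ∩ B2).card
        = ((B0 ∪ B1) ∪ B3).card + B2.card := Finset.card_union_add_card_inter _ _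
    have hsub2 : B2 ∩ B1 ⊆ ((B0 ∪ B1) ∪ B3) ∩ B2 := by
      intro y hy
      rw [Finset.mem_inter] at hy ⊢
      exact ⟨by simp [Finset.mem_union, hy.2], hy.1⟩
    have c2 : 6 ≤ (((B0 ∪ B1) ∪ B3) ∩ B2).card :=
      le_trans hx (Finset.card_le_card hsub2)
    have c3 : ((B0 ∪ B1) ∪ B3).card ≤ (B0 ∪ B1).card + B3.card := Finset.card_union_le _ _
    omega
  · have hsub : S ⊆ (B0 ∪ B1) ∪ (B2 ∪ B3) := by
      intro y hy; rcases hS y hy with h | h | h | h <;> simp [Finset.mem_union, h]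
    have c1 : S.card ≤ ((B0 ∪ B1) ∪ (B2 ∪ B3)).card := Finset.card_le_card hsub
    have c2 : ((B0 ∪ B1) ∪ (B2 ∪ B3)).card ≤ (B0 ∪ B1).card + (B2 ∪ B3).card :=
      Finset.card_union_le _ _
    have e23 : (B2 ∪ B3).card + (B2 ∩ B3).card = B2.card + B3.card :=
      Finset.card_union_add_card_inter _ _
    omega

set_option maxRecDepth 10000 in
lemma normball72 :
    (Finset.univ.filter (fun z : Fin 7 → ZMod 2 => hammingNorm z ≤ 2)).card = 29 := by
  decide

set_option maxHeartbeats 3200000 in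
lemma gcard7_le (C : Fin 4 → Fin 7 → ZMod 2) : gcard C 2 ≤ 104 := by
  have hBcard : ∀ i : Fin 4,
      (Finset.univ.filter (fun y => hammingDist (C i) y ≤ 2)).card ≤ 29 := by
    intro i; rw [card_ball, normball72]
  set B : Fin 4 → Finset (Fin 7 → ZMod 2) :=
    fun i => Finset.univ.filter (fun y => hammingDist (C i) y ≤ 2) with hB
  show (Finset.univ.filter (fun y : Fin 7 → ZMod 2 => dmin C y ≤ 2)).card ≤ 104
  have hS : ∀ y ∈ Finset.univ.filter (fun y : Fin 7 → ZMod 2 => dmin C y ≤ 2),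
      y ∈ B 0 ∨ y ∈ B 1 ∨ y ∈ B 2 ∨ y ∈ B 3 := by
    intro y hy
    obtain ⟨i, hi⟩ := (dmin_le_iff C y 2).mp (Finset.mem_filter.mp hy).2
    have hmem : y ∈ B i := Finset.mem_filter.mpr ⟨Finset.mem_univ y, hi⟩
    fin_cases i
    · exact Or.inl hmem
    · exact Or.inr (Or.inl hmem)
    · exact Or.inr (Or.inr (Or.inl hmem))
    · exact Or.inr (Or.inr (Or.inr hmem))
  have hI : ∀ i j : Fin 4, hammingDist (C i) (C j) ≤ 4 → 6 ≤ (B i ∩ B j).card :=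
    fun i j h => inter_lb (C i) (C j) h
  have hP : ∀ i j k : Fin 4, hammingDist (C i) (C j) ≤ 4 ∨
      hammingDist (C i) (C k) ≤ 4 ∨ hammingDist (C j) (C k) ≤ 4 :=
    fun i j k => plotkin7 _ _ _
  have hcomm : ∀ i j : Fin 4, hammingDist (C i) (C j) ≤ 4 →
      hammingDist (C j) (C i) ≤ 4 := by
    intro i j h; rwa [hammingDist_comm]
  by_cases h01 : hammingDist (C 0) (C 1) ≤ 4
  · by_cases h02 : hammingDist (C 0) (C 2) ≤ 4
    · exact card_union4_le _ (B 0) (B 1) (B 2) (B 3) hS (hBcard 0) (hBcard 1)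
        (hBcard 2) (hBcard 3) (hI 0 1 h01) (Or.inl (hI 2 0 (hcomm 0 2 h02)))
    · by_cases h12 : hammingDist (C 1) (C 2) ≤ 4
      · exact card_union4_le _ (B 0) (B 1) (B 2) (B 3) hS (hBcard 0) (hBcard 1)
          (hBcard 2) (hBcard 3) (hI 0 1 h01) (Or.inr (Or.inl (hI 2 1 (hcomm 1 2 h12))))
      · by_cases h03 : hammingDist (C 0) (C 3) ≤ 4
        · exact card_union4_le _ (B 0) (B 1) (B 3) (B 2)
            (fun y hy => by have := hS y hy; tauto) (hBcard 0) (hBcard 1)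
            (hBcard 3) (hBcard 2) (hI 0 1 h01) (Or.inl (hI 3 0 (hcomm 0 3 h03)))
        · by_cases h13 : hammingDist (C 1) (C 3) ≤ 4
          · exact card_union4_le _ (B 0) (B 1) (B 3) (B 2)
              (fun y hy => by have := hS y hy; tauto) (hBcard 0) (hBcard 1)
              (hBcard 3) (hBcard 2) (hI 0 1 h01) (Or.inr (Or.inl (hI 3 1 (hcomm 1 3 h13))))
          · have h23 : hammingDist (C 2) (C 3) ≤ 4 := by
              rcases hP 0 2 3 with h | h | h
              · exact absurd h h02
              · exact absurd h h03
              · exact h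
            exact card_union4_le _ (B 0) (B 1) (B 2) (B 3) hS (hBcard 0) (hBcard 1)
              (hBcard 2) (hBcard 3) (hI 0 1 h01) (Or.inr (Or.inr (hI 2 3 h23)))
  · rcases hP 0 1 2 with h | h02 | h12
    · exact absurd h h01
    · by_cases h12 : hammingDist (C 1) (C 2) ≤ 4
      · exact card_union4_le _ (B 0) (B 2) (B 1) (B 3)
          (fun y hy => by have := hS y hy; tauto) (hBcard 0) (hBcard 2)
          (hBcard 1) (hBcard 3) (hI 0 2 h02) (Or.inr (Or.inl (hI 1 2 h12)))
      · by_cases h13 : hammingDist (C 1) (C 3) ≤ 4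
        · exact card_union4_le _ (B 0) (B 2) (B 3) (B 1)
            (fun y hy => by have := hS y hy; tauto) (hBcard 0) (hBcard 2)
            (hBcard 3) (hBcard 1) (hI 0 2 h02) (Or.inr (Or.inr (hI 3 1 (hcomm 1 3 h13))))
        · have h03 : hammingDist (C 0) (C 3) ≤ 4 := by
            rcases hP 1 0 3 with h | h | h
            · exact absurd (hcomm 1 0 h) h01
            · exact absurd h h13
            · exact h
          exact card_union4_le _ (B 0) (B 2) (B 3) (B 1)
            (fun y hy => by have := hS y hy; tauto) (hBcard 0) (hBcard 2)
            (hBcard 3) (hBcard 1) (hI 0 2 h02) (Or.inl (hI 3 0 (hcomm 0 3 h03)))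
    · by_cases h02 : hammingDist (C 0) (C 2) ≤ 4
      · exact card_union4_le _ (B 1) (B 2) (B 0) (B 3)
          (fun y hy => by have := hS y hy; tauto) (hBcard 1) (hBcard 2)
          (hBcard 0) (hBcard 3) (hI 1 2 h12) (Or.inr (Or.inl (hI 0 2 h02)))
      · by_cases h03 : hammingDist (C 0) (C 3) ≤ 4
        · exact card_union4_le _ (B 1) (B 2) (B 0) (B 3)
            (fun y hy => by have := hS y hy; tauto) (hBcard 1) (hBcard 2)
            (hBcard 0) (hBcard 3) (hI 1 2 h12) (Or.inr (Or.inr (hI 0 3 h03)))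
        · by_cases h13 : hammingDist (C 1) (C 3) ≤ 4
          · exact card_union4_le _ (B 1) (B 2) (B 3) (B 0)
              (fun y hy => by have := hS y hy; tauto) (hBcard 1) (hBcard 2)
              (hBcard 3) (hBcard 0) (hI 1 2 h12) (Or.inl (hI 3 1 (hcomm 1 3 h13)))
          · by_cases h23 : hammingDist (C 2) (C 3) ≤ 4
            · exact card_union4_le _ (B 1) (B 2) (B 3) (B 0)
                (fun y hy => by have := hS y hy; tauto) (hBcard 1) (hBcard 2)
                (hBcard 3) (hBcard 0) (hI 1 2 h12) (Or.inr (Or.inl (hI 3 2 (hcomm 2 3 h23))))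
            · exfalso
              rcases hP 1 3 0 with h | h | h
              · exact absurd h h13
              · exact absurd (hcomm 1 0 h) h01
              · exact absurd (hcomm 3 0 h) h03

/-! ### Main theorem -/

set_option maxHeartbeats 4000000 in
set_option maxRecDepth 1000000 in
/-- For block length `n ≤ 8`, linear `(n,2)` codes are optimal on the BSC. -/
theorem stmt7 (n : ℕ) (hn : n ≤ 8) (ε : ℝ) (hε1 : 0 < ε) (hε2 : ε < 1/2) :
    ∃ C : Fin 4 → Fin n → ZMod 2, IsLinearCode C ∧
      ∀ C' : Fin 4 → Fin n → ZMod 2, lam C' ε ≤ lam C ε := by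
  interval_cases n
  · exact ⟨_, isLinear_quad ![] ![], fun C' => lam_le_lam _ C' ε hε1 hε2
      (fun r hr => absurd hr (Nat.not_lt_zero r))⟩
  · refine ⟨_, isLinear_quad ![1] ![1], fun C' => lam_le_lam _ C' ε hε1 hε2
      (fun r hr => ?_)⟩
    interval_cases r
    · exact le_trans (gcard_le_total C' 0) (by decide)
  · refine ⟨_, isLinear_quad ![1,1] ![0,1], fun C' => lam_le_lam _ C' ε hε1 hε2
      (fun r hr => ?_)⟩
    interval_cases r
    · exact le_trans (gcard_le_total C' 0) (by decide)
    · exact le_trans (gcard_le_total C' 1) (by decide)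
  · refine ⟨_, isLinear_quad ![0,1,1] ![1,0,1], fun C' => lam_le_lam _ C' ε hε1 hε2
      (fun r hr => ?_)⟩
    interval_cases r
    · exact le_trans (gcard_zero_le C') (by decide)
    · exact le_trans (gcard_le_total C' 1) (by decide)
    · exact le_trans (gcard_le_total C' 2) (by decide)
  · refine ⟨_, isLinear_quad ![0,1,1,1] ![1,0,1,1], fun C' => lam_le_lam _ C' ε hε1 hε2
      (fun r hr => ?_)⟩
    interval_cases r
    · exact le_trans (gcard_zero_le C') (by decide)
    · exact le_trans (gcard_le_total C' 1) (by decide)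
    · exact le_trans (gcard_le_total C' 2) (by decide)
    · exact le_trans (gcard_le_total C' 3) (by decide)
  · refine ⟨_, isLinear_quad ![0,1,1,1,1] ![1,0,0,1,1], fun C' => lam_le_lam _ C' ε hε1 hε2
      (fun r hr => ?_)⟩
    interval_cases r
    · exact le_trans (gcard_zero_le C') (by decide)
    · exact le_trans (gcard_le_four_ball C' 1) (by decide)
    · exact le_trans (gcard_le_total C' 2) (by decide)
    · exact le_trans (gcard_le_total C' 3) (by decide)
    · exact le_trans (gcard_le_total C' 4) (by decide)
  · refine ⟨_, isLinear_quad ![0,1,1,1,1,1] ![1,0,0,1,1,1], fun C' => lam_le_lam _ C' ε hε1 hε2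
      (fun r hr => ?_)⟩
    interval_cases r
    · exact le_trans (gcard_zero_le C') (by decide)
    · exact le_trans (gcard_le_four_ball C' 1) (by decide)
    · exact le_trans (gcard_le_total C' 2) (by decide)
    · exact le_trans (gcard_le_total C' 3) (by decide)
    · exact le_trans (gcard_le_total C' 4) (by decide)
    · exact le_trans (gcard_le_total C' 5) (by decide)
  · refine ⟨_, isLinear_quad ![0,0,1,1,1,1,1] ![1,1,0,0,1,1,1], fun C' => lam_le_lam _ C' ε hε1 hε2
      (fun r hr => ?_)⟩
    interval_cases r
    · exact le_trans (gcard_zero_le C') (by decide)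
    · exact le_trans (gcard_le_four_ball C' 1) (by decide)
    · exact le_trans (gcard7_le C') (by decide)
    · exact le_trans (gcard_le_total C' 3) (by decide)
    · exact le_trans (gcard_le_total C' 4) (by decide)
    · exact le_trans (gcard_le_total C' 5) (by decide)
    · exact le_trans (gcard_le_total C' 6) (by decide)
  · refine ⟨_, isLinear_quad ![0,0,1,1,1,1,1,1] ![1,1,0,0,0,1,1,1], fun C' => lam_le_lam _ C' ε hε1 hε2
      (fun r hr => ?_)⟩
    interval_cases r
    · exact le_trans (gcard_zero_le C') (by decide)
    · exact le_trans (gcard_le_four_ball C' 1) (by decide)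
    · exact le_trans (gcard_le_four_ball C' 2) (by decide)
    · exact le_trans (gcard_le_total C' 3) (by decide)
    · exact le_trans (gcard_le_total C' 4) (by decide)
    · exact le_trans (gcard_le_total C' 5) (by decide)
    · exact le_trans (gcard_le_total C' 6) (by decide)
    · exact le_trans (gcard_le_total C' 7) (by decide)
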